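/- Let $r \geq 1$ be an integer and $c_1 > 1$ a real number. The Euclidean space $\mathbb{R}^r$ can be covered by at most $\lfloor (1 + \sqrt{8 c_1})^r \rfloor$ cones with vertex $0$ and angular opening $\arccos(1 - \frac{1}{c_1})$ each; that is, there exist unit vectors $u_1, \dots, u_N$ with $N \leq (1+\sqrt{8c_1})^r$ such that every nonzero $x \in \mathbb{R}^r$ satisfies $\frac{\langle x, u_i \rangle}{\|x\|} \geq \cos\big(\arccos(1 - 1/c_1)\big) = 1 - \frac{1}{c_1}$ for some $i$. -/

import Mathlib

open Metric Set Module MeasureTheory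
open scoped ENNReal RealInnerProductSpace

/-- packing bound: a δ-separated set of vectors of norm ≤ 1 has cardinality ≤ (1+2/δ)^dim. -/
theorem pack_card_le {E : Type*} [NormedAddCommGroup E] [NormedSpace ℝ E]
    [MeasurableSpace E] [BorelSpace E] [FiniteDimensional ℝ E]
    (δ : ℝ) (hδ : 0 < δ) (s : Finset E) (hs : ∀ c ∈ s, ‖c‖ ≤ 1)
    (h : ∀ c ∈ s, ∀ d ∈ s, c ≠ d → δ ≤ ‖c - d‖) :
    (s.card : ℝ) ≤ (1 + 2 / δ) ^ finrank ℝ E := by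
  let μ : Measure E := Measure.addHaar
  have hδ2 : (0:ℝ) < δ / 2 := by linarith
  have hρ : (0:ℝ) < 1 + δ / 2 := by linarith
  set A := ⋃ c ∈ s, ball (c : E) (δ/2) with hA
  have D : Set.Pairwise (s : Set E) (Function.onFun Disjoint fun c => ball (c : E) (δ/2)) := by
    rintro c hc d hd hcd
    apply ball_disjoint_ball
    rw [dist_eq_norm]
    have := h c hc d hd hcd
    linarith
  have A_subset : A ⊆ ball (0 : E) (1 + δ/2) := by
    refine iUnion₂_subset fun x hx => ?_
    apply ball_subset_ball'
    rw [dist_zero_right]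
    have := hs x hx
    linarith
  have I :
      (s.card : ℝ≥0∞) * ENNReal.ofReal ((δ/2) ^ finrank ℝ E) * μ (ball 0 1) ≤
        ENNReal.ofReal ((1 + δ/2) ^ finrank ℝ E) * μ (ball 0 1) :=
    calc
      (s.card : ℝ≥0∞) * ENNReal.ofReal ((δ/2) ^ finrank ℝ E) * μ (ball 0 1) = μ A := by
        rw [hA, measure_biUnion_finset D fun c _ => measurableSet_ball]
        simp only [μ.addHaar_ball_of_pos _ hδ2]
        simp only [Finset.sum_const, nsmul_eq_mul, mul_assoc]
      _ ≤ μ (ball (0 : E) (1 + δ/2)) := measure_mono A_subset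
      _ = ENNReal.ofReal ((1 + δ/2) ^ finrank ℝ E) * μ (ball 0 1) := by
        simp only [μ.addHaar_ball_of_pos _ hρ]
  have J : (s.card : ℝ≥0∞) * ENNReal.ofReal ((δ/2) ^ finrank ℝ E) ≤
      ENNReal.ofReal ((1 + δ/2) ^ finrank ℝ E) :=
    (ENNReal.mul_le_mul_iff_left (measure_ball_pos _ _ zero_lt_one).ne' measure_ball_lt_top.ne).1 I
  have K := ENNReal.toReal_le_of_le_ofReal (pow_nonneg hρ.le _) J
  rw [ENNReal.toReal_mul, ENNReal.toReal_ofReal (pow_nonneg hδ2.le _), ENNReal.toReal_natCast] at K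
  have hpow : (0:ℝ) < (δ/2) ^ finrank ℝ E := pow_pos hδ2 _
  rw [← le_div_iff₀ hpow] at K
  calc (s.card : ℝ) ≤ (1 + δ/2) ^ finrank ℝ E / (δ/2) ^ finrank ℝ E := K
    _ = ((1 + δ/2) / (δ/2)) ^ finrank ℝ E := (div_pow _ _ _).symm
    _ = (1 + 2/δ) ^ finrank ℝ E := by
        congr 1
        field_simp
        ring

theorem stmt_5 (r : ℕ) (hr : 1 ≤ r) (c₁ : ℝ) (hc : 1 < c₁) :
    ∃ (N : ℕ) (u : Fin N → EuclideanSpace ℝ (Fin r)),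
      (N : ℝ) ≤ (1 + Real.sqrt (8 * c₁)) ^ r ∧
      (∀ i, ‖u i‖ = 1) ∧
      ∀ x : EuclideanSpace ℝ (Fin r), x ≠ 0 →
        ∃ i, 1 - 1 / c₁ ≤ ⟪x, u i⟫ / ‖x‖ := by
  classical
  have hc0 : (0:ℝ) < c₁ := by linarith
  set E := EuclideanSpace ℝ (Fin r)
  set δ : ℝ := Real.sqrt (2 / c₁) with hδdef
  have hδ : 0 < δ := Real.sqrt_pos.2 (by positivity)
  have hδsq : δ ^ 2 = 2 / c₁ := Real.sq_sqrt (by positivity)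
  -- `2/δ = √(2c₁)`
  have h2δ : 2 / δ = Real.sqrt (2 * c₁) := by
    rw [eq_comm, eq_div_iff hδ.ne']
    rw [hδdef, ← Real.sqrt_mul (by positivity)]
    rw [show 2 * c₁ * (2 / c₁) = 4 by field_simp; ring]
    rw [show (4:ℝ) = 2^2 by norm_num, Real.sqrt_sq (by norm_num)]
  have hbound : 1 + 2 / δ ≤ 1 + Real.sqrt (8 * c₁) := by
    rw [h2δ]
    have := Real.sqrt_le_sqrt (show 2 * c₁ ≤ 8 * c₁ by linarith)
    linarith
  -- separated finsets on the sphere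
  set P : Finset E → Prop :=
    fun s => (∀ c ∈ s, ‖c‖ = 1) ∧ ∀ c ∈ s, ∀ d ∈ s, c ≠ d → δ ≤ ‖c - d‖ with hP
  have cardle : ∀ s : Finset E, P s → (s.card : ℝ) ≤ (1 + 2 / δ) ^ r := by
    intro s hs
    have := pack_card_le δ hδ s (fun c hc => (hs.1 c hc).le) hs.2
    rwa [finrank_euclideanSpace_fin] at this
  set K : Set ℕ := {n | ∃ s : Finset E, P s ∧ s.card = n} with hK
  have hK0 : (0 : ℕ) ∈ K := ⟨∅, ⟨by simp, by simp⟩, rfl⟩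
  have hKbdd : BddAbove K := by
    refine ⟨⌈(1 + 2 / δ) ^ r⌉₊, fun n hn => ?_⟩
    obtain ⟨s, hs, rfl⟩ := hn
    have h1 : (s.card : ℝ) ≤ ((⌈(1 + 2 / δ) ^ r⌉₊ : ℕ) : ℝ) :=
      le_trans (cardle s hs) (Nat.le_ceil _)
    exact_mod_cast h1
  obtain ⟨s, hsP, hscard⟩ := Nat.sSup_mem ⟨0, hK0⟩ hKbdd
  refine ⟨s.card, fun i => (s.equivFin.symm i : E), ?_, ?_, ?_⟩
  · calc (s.card : ℝ) ≤ (1 + 2 / δ) ^ r := cardle s hsP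
      _ ≤ (1 + Real.sqrt (8 * c₁)) ^ r :=
        pow_le_pow_left₀ (by positivity) hbound r
  · intro i; exact hsP.1 _ (s.equivFin.symm i).2
  · intro x hx
    have hxn : ‖x‖ ≠ 0 := norm_ne_zero_iff.2 hx
    set y : E := ‖x‖⁻¹ • x with hy
    have hyn : ‖y‖ = 1 := norm_smul_inv_norm hx
    -- maximality: some point of s is within δ of y
    have hclose : ∃ c ∈ s, ‖y - c‖ < δ := by
      by_contra hcon
      push_neg at hcon
      have hys : y ∉ s := by
        intro hys
        have := hcon y hys
        simp at this
        linarith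
      have hPins : P (insert y s) := by
        constructor
        · intro c hcm
          rcases Finset.mem_insert.1 hcm with h1 | h1
          · rw [h1]; exact hyn
          · exact hsP.1 c h1
        · intro c hcm d hdm hcd
          rcases Finset.mem_insert.1 hcm with h1 | h1 <;>
            rcases Finset.mem_insert.1 hdm with h2 | h2
          · exact absurd (h1.trans h2.symm) hcd
          · rw [h1]; exact hcon d h2
          · rw [h2, norm_sub_rev]; exact hcon c h1
          · exact hsP.2 c h1 d h2 hcd
      have hmem : s.card + 1 ∈ K := ⟨insert y s, hPins, Finset.card_insert_of_notMem hys⟩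
      have := le_csSup hKbdd hmem
      omega
    obtain ⟨c, hcs, hcclose⟩ := hclose
    refine ⟨s.equivFin ⟨c, hcs⟩, ?_⟩
    have hu : (s.equivFin.symm (s.equivFin ⟨c, hcs⟩) : E) = c := by
      rw [Equiv.symm_apply_apply]
    simp only [hu]
    -- inner product estimate
    have hcn : ‖c‖ = 1 := hsP.1 c hcs
    have hsub : ‖y - c‖ ^ 2 = ‖y‖ ^ 2 - 2 * ⟪y, c⟫ + ‖c‖ ^ 2 := norm_sub_sq_real y c
    have h1 : ‖y - c‖ ^ 2 < δ ^ 2 := by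
      apply sq_lt_sq' _ hcclose
      have : (0:ℝ) ≤ ‖y - c‖ := norm_nonneg _
      linarith
    have hyc : 1 - 1 / c₁ ≤ ⟪y, c⟫ := by
      rw [hyn, hcn] at hsub
      rw [hδsq] at h1
      have h2 : 2 / c₁ = 2 * (1 / c₁) := by ring
      nlinarith
    have hinner : ⟪x, c⟫ / ‖x‖ = ⟪y, c⟫ := by
      rw [hy, real_inner_smul_left, div_eq_inv_mul]
    rw [hinner]
    exact hyc
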